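/- Let F be a ℤ-indexed cochain complex of finitely generated projective right A-modules belonging to the class L_A. Then for every k ∈ ℤ and every finitely generated right A-module Z that is both projective and injective, every A-homomorphism from H^k(F) to Z is zero, i.e., Hom_A(H^k(F), Z) = 0. -/
import Mathlib


def unopEquiv (A : Type) [Ring A] : Aᵐᵒᵖ ≃ₗ[Aᵐᵒᵖ] A where
  toFun := MulOpposite.unop
  invFun := MulOpposite.op
  map_add' _ _ := rfl
  map_smul' _ _ := rfl
  left_inv _ := rfl
  right_inv _ := rfl

/-- Let `F` be a `ℤ`-indexed cochain complex of finitely generated projective right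
`A`-modules which lies in the class `L_A`, i.e. `H^j(F) = 0` for all `j < 0` (expressed
below at position `i+1` for all `i : ℤ` with `i+1 < 0`) and `H_j(F*) = 0` for all
`j ≥ 0`, i.e. `Hom_A(F^{j+1},A) → Hom_A(F^j,A) → Hom_A(F^{j-1},A)` is exact at the
middle for every `j ≥ 0` (expressed below at position `j = i+1`).  Then for every
position and every finitely generated projective-injective right `A`-module `Z`, every
`A`-homomorphism from the cohomology `H^{i+1}(F) = ker(d^{i+1})/im(d^i)` to `Z` is
zero. -/
theorem hom_cohomology_to_projInjective_eq_zero_of_mem_LA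
    (k A : Type) [Field k] [Ring A] [Algebra k A] [FiniteDimensional k A]
    (F : ℤ → Type) [∀ i, AddCommGroup (F i)] [∀ i, Module Aᵐᵒᵖ (F i)]
    [∀ i, Module.Finite Aᵐᵒᵖ (F i)]
    (hFproj : ∀ i, Module.Projective Aᵐᵒᵖ (F i))
    (d : ∀ i : ℤ, F i →ₗ[Aᵐᵒᵖ] F (i + 1))
    (hd : ∀ i : ℤ, (d (i + 1)).comp (d i) = 0)
    -- `H^j(F) = 0` for all `j < 0` :
    (hL₁ : ∀ i : ℤ, i + 1 < 0 → Function.Exact (d i) (d (i + 1)))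
    -- `H_j(F*) = 0` for all `j ≥ 0` :
    (hL₂ : ∀ i : ℤ, 0 ≤ i + 1 →
      Function.Exact (fun φ : F (i + 1 + 1) →ₗ[Aᵐᵒᵖ] A => φ.comp (d (i + 1)))
        (fun φ : F (i + 1) →ₗ[Aᵐᵒᵖ] A => φ.comp (d i)))
    -- `Z` finitely generated projective-injective :
    (Z : Type) [AddCommGroup Z] [Module Aᵐᵒᵖ Z] [Module.Finite Aᵐᵒᵖ Z]
    (hZproj : Module.Projective Aᵐᵒᵖ Z) (hZinj : Module.Injective Aᵐᵒᵖ Z)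
    (i : ℤ)
    (φ : (↥(LinearMap.ker (d (i + 1))) ⧸
      (LinearMap.range (d i)).comap (LinearMap.ker (d (i + 1))).subtype) →ₗ[Aᵐᵒᵖ] Z) :
    φ = 0 := by
  rcases lt_or_ge (i + 1) 0 with hneg | hpos
  · -- negative degree: cohomology vanishes
    have hex := hL₁ i hneg
    have htop : (LinearMap.range (d i)).comap (LinearMap.ker (d (i + 1))).subtype = ⊤ := by
      ext x
      simp only [Submodule.mem_comap, Submodule.mem_top, iff_true]
      exact (hex (x : F (i + 1))).mp x.2
    haveI hsub : Subsingleton (↥(LinearMap.ker (d (i + 1))) ⧸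
        (LinearMap.range (d i)).comap (LinearMap.ker (d (i + 1))).subtype) :=
      Submodule.Quotient.subsingleton_iff.mpr htop
    refine LinearMap.ext fun x => ?_
    rw [Subsingleton.elim x 0, map_zero, map_zero]
  · -- nonnegative degree
    -- extend φ ∘ mkQ along the inclusion K ↪ F (i+1) using injectivity of Z
    obtain ⟨Ψ, hΨ⟩ := hZinj.out (LinearMap.ker (d (i + 1))).subtype (Submodule.injective_subtype _) (φ.comp ((LinearMap.range (d i)).comap (LinearMap.ker (d (i + 1))).subtype).mkQ)
    -- Ψ ∘ d i = 0
    have hΨd : Ψ.comp (d i) = 0 := by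
      ext y
      have hmem : d i y ∈ LinearMap.ker (d (i + 1)) := by
        rw [LinearMap.mem_ker, ← LinearMap.comp_apply, hd i]
        rfl
      have h1 : Ψ (d i y) = (φ.comp ((LinearMap.range (d i)).comap (LinearMap.ker (d (i + 1))).subtype).mkQ) ⟨d i y, hmem⟩ := hΨ ⟨d i y, hmem⟩
      have h2 : ((LinearMap.range (d i)).comap (LinearMap.ker (d (i + 1))).subtype).mkQ ⟨d i y, hmem⟩ = 0 := by
        rw [Submodule.mkQ_apply, Submodule.Quotient.mk_eq_zero]
        exact ⟨y, rfl⟩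
      simp only [LinearMap.comp_apply, LinearMap.zero_apply] at h1 ⊢
      rw [h1, h2, map_zero]
    -- choose a split surjection (Fin n → A) → Z
    obtain ⟨n, pr0, hpr0⟩ := Module.Finite.exists_fin' Aᵐᵒᵖ Z
    set epi : (Fin n → A) ≃ₗ[Aᵐᵒᵖ] (Fin n → Aᵐᵒᵖ) :=
      LinearEquiv.piCongrRight fun _ : Fin n => (unopEquiv A).symm with hepi
    set pr : (Fin n → A) →ₗ[Aᵐᵒᵖ] Z := pr0.comp epi.toLinearMap with hprdef
    have hpr : Function.Surjective pr := hpr0.comp epi.surjective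
    obtain ⟨s, hs⟩ := Module.projective_lifting_property pr LinearMap.id hpr
    -- the components of s ∘ Ψ factor through d (i+1) by hL₂
    have hcomp : ∀ j : Fin n,
        ∃ θ : F (i + 1 + 1) →ₗ[Aᵐᵒᵖ] A,
          θ.comp (d (i + 1)) = (LinearMap.proj j).comp (s.comp Ψ) := by
      intro j
      have h0 : ((LinearMap.proj (R := Aᵐᵒᵖ) (φ := fun _ : Fin n => A) j).comp
          (s.comp Ψ)).comp (d i) = 0 := by
        ext y
        have h1 : Ψ (d i y) = 0 := by
          have := congrArg (fun f => f y) hΨd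
          simpa using this
        simp [LinearMap.comp_apply, h1]
      exact Set.mem_range.mp
        ((hL₂ i hpos ((LinearMap.proj j).comp (s.comp Ψ))).mp h0)
    choose θ hθ using hcomp
    -- assemble Θ : F (i+1+1) → Z
    set Θ : F (i + 1 + 1) →ₗ[Aᵐᵒᵖ] Z := pr.comp (LinearMap.pi θ) with hΘ
    have hfactor : ∀ x : F (i + 1), Θ (d (i + 1) x) = Ψ x := by
      intro x
      have h1 : (fun j => θ j (d (i + 1) x)) = s (Ψ x) := by
        funext j
        have := congrArg (fun f => f x) (hθ j)
        simpa using this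
      have h2 : pr (s (Ψ x)) = Ψ x := by
        have := congrArg (fun f => f (Ψ x)) hs
        simpa using this
      calc Θ (d (i + 1) x) = pr (fun j => θ j (d (i + 1) x)) := rfl
        _ = pr (s (Ψ x)) := by rw [h1]
        _ = Ψ x := h2
    -- conclude φ = 0
    refine Submodule.linearMap_qext _ ?_
    refine LinearMap.ext fun x => ?_
    have h1 : Ψ ((LinearMap.ker (d (i + 1))).subtype x) = (φ.comp ((LinearMap.range (d i)).comap (LinearMap.ker (d (i + 1))).subtype).mkQ) x := hΨ x
    have h3 : d (i + 1) (x : F (i + 1)) = 0 := x.2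
    have h4 : Ψ ((x : F (i + 1))) = 0 := by
      rw [← hfactor (x : F (i + 1)), h3, map_zero]
    calc (φ.comp ((LinearMap.range (d i)).comap (LinearMap.ker (d (i + 1))).subtype).mkQ) x = Ψ ((LinearMap.ker (d (i + 1))).subtype x) := h1.symm
      _ = 0 := h4
      _ = ((0 : _ →ₗ[Aᵐᵒᵖ] Z).comp ((LinearMap.range (d i)).comap (LinearMap.ker (d (i + 1))).subtype).mkQ) x := rfl
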